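/- In a weighted graph where an optimal Graph Inspection solution exists, if T[v, S] is the minimum weight of a walk from s to v collecting color set S (over the shortest-path metric w'), then the optimal solution value for Graph Inspection with threshold t equals the minimum over all vertices v ≠ s and all color sets S of size t of T[v, S] + w'(v, s). -/

import Mathlib

open scoped ENNReal

/-- Weight of a walk (ℝ≥0∞-valued): sum of weights of consecutive pairs. Non-edges may be
encoded by weight `⊤`. -/
noncomputable def walkWeightE {V : Type*} (w : V → V → ℝ≥0∞) : List V → ℝ≥0∞
  | [] => 0
  | [_] => 0
  | a :: b :: rest => w a b + walkWeightE w (b :: rest)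

/-- The set of colors collected by a walk. -/
def collected {V C : Type*} [DecidableEq C] (col : V → Finset C) (p : List V) : Finset C :=
  p.foldr (fun v acc => col v ∪ acc) ∅

section Aux

variable {V C : Type*} [DecidableEq C]

lemma collected_cons (col : V → Finset C) (a : V) (p : List V) :
    collected col (a :: p) = col a ∪ collected col p := rfl

lemma collected_append (col : V → Finset C) (p q : List V) :
    collected col (p ++ q) = collected col p ∪ collected col q := by
  induction p with
  | nil => simp [collected]
  | cons a p ih => simp [collected_cons, ih, Finset.union_assoc]

lemma walkWeightE_append (w : V → V → ℝ≥0∞) :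
    ∀ (p q : List V) (v : V), p.getLast? = some v → q.head? = some v →
      walkWeightE w (p ++ q.tail) = walkWeightE w p + walkWeightE w q
  | [], q, v, hp, hq => by simp at hp
  | [a], q, v, hp, hq => by
      simp at hp
      cases q with
      | nil => simp at hq
      | cons b q' =>
        simp at hq
        subst hp; subst hq
        simp [walkWeightE]
  | a :: b :: rest, q, v, hp, hq => by
      have ih := walkWeightE_append w (b :: rest) q v (by simpa using hp) hq
      have h1 : walkWeightE w ((a :: b :: rest) ++ q.tail)
          = w a b + walkWeightE w ((b :: rest) ++ q.tail) := rfl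
      have h2 : walkWeightE w (a :: b :: rest) = w a b + walkWeightE w (b :: rest) := rfl
      rw [h1, ih, h2, add_assoc]

lemma split_collect (col : V → Finset C) (S : Finset C) (hS : S.Nonempty) :
    ∀ p : List V, S ⊆ collected col p →
      ∃ a v b, p = a ++ v :: b ∧ S ⊆ collected col (a ++ [v]) ∧ (col v ∩ S).Nonempty := by
  intro p
  induction p using List.reverseRecOn with
  | nil =>
    intro h
    obtain ⟨c, hc⟩ := hS
    exact absurd (h hc) (by simp [collected])
  | append_singleton q x ih =>
    intro h
    by_cases hq : S ⊆ collected col q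
    · obtain ⟨a, v, b, heq, h1, h2⟩ := ih hq
      exact ⟨a, v, b ++ [x], by rw [heq]; simp, h1, h2⟩
    · obtain ⟨c, hcS, hcq⟩ := Finset.not_subset.mp hq
      have hcx : c ∈ col x := by
        have := h hcS
        rw [collected_append] at this
        simp only [Finset.mem_union] at this
        rcases this with h' | h'
        · exact absurd h' hcq
        · simpa [collected] using h'
      exact ⟨q, x, [], by simp, h, ⟨c, Finset.mem_inter.mpr ⟨hcx, hcS⟩⟩⟩

end Aux

/-- if `T v S` is the minimum weight of an `s`-to-`v` walk collecting the color
set `S` (over the graph encoded by `w`, with shortest-path distance `w'`), then the optimal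
value of Graph Inspection with threshold `t` equals the minimum over all `v ≠ s` and all
color sets `S` of size `t` of `T v S + w'(v, s)`. -/
theorem stmt16 {V C : Type*} [DecidableEq C]
    (w : V → V → ℝ≥0∞) (hwsymm : ∀ u v, w u v = w v u)
    (col : V → Finset C) (s : V) (hcols : col s = ∅)
    (t : ℕ) (ht : 1 ≤ t)
    (htfeas : ∃ S : Finset C, S.card = t ∧ ∀ c ∈ S, ∃ v : V, c ∈ col v)
    (w' : V → V → ℝ≥0∞)
    (hw' : ∀ u v, w' u v = sInf {x | ∃ p : List V,
        p.head? = some u ∧ p.getLast? = some v ∧ walkWeightE w p = x})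
    (hconn : ∀ u v, w' u v ≠ ⊤)
    (T : V → Finset C → ℝ≥0∞)
    (hT : ∀ (v : V) (S : Finset C),
        T v S = sInf {x | ∃ p : List V, p.head? = some s ∧ p.getLast? = some v ∧
          S ⊆ collected col p ∧ walkWeightE w p = x}) :
    sInf {x | ∃ p : List V, p.head? = some s ∧ p.getLast? = some s ∧
        t ≤ (collected col p).card ∧ walkWeightE w p = x}
      = ⨅ (v : V) (_ : v ≠ s) (S : Finset C) (_ : S.card = t), T v S + w' v s := by
  apply le_antisymm
  · -- sInf OPT ≤ iInf
    refine le_iInf fun v => le_iInf fun hv => le_iInf fun S => le_iInf fun hS => ?_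
    rw [hT, hw']
    set A := {x | ∃ p : List V, p.head? = some s ∧ p.getLast? = some v ∧
          S ⊆ collected col p ∧ walkWeightE w p = x} with hA
    set B := {x | ∃ p : List V, p.head? = some v ∧ p.getLast? = some s ∧
        walkWeightE w p = x} with hB
    refine ENNReal.le_of_forall_pos_le_add fun ε hε hlt => ?_
    have hA' : sInf A ≠ ⊤ := fun h => by simp [h] at hlt
    have hB' : sInf B ≠ ⊤ := fun h => by simp [h] at hlt
    have hε2 : (0 : ℝ≥0∞) < (ε : ℝ≥0∞) / 2 := by
      refine ENNReal.div_pos ?_ (by norm_num)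
      exact_mod_cast hε.ne'
    have hGA : sInf A < sInf A + ε / 2 := ENNReal.lt_add_right hA' hε2.ne'
    have hGB : sInf B < sInf B + ε / 2 := ENNReal.lt_add_right hB' hε2.ne'
    obtain ⟨x₁, hx₁A, hx₁⟩ := sInf_lt_iff.mp hGA
    obtain ⟨x₂, hx₂B, hx₂⟩ := sInf_lt_iff.mp hGB
    obtain ⟨p, hph, hpl, hpc, hpw⟩ := hx₁A
    obtain ⟨q, hqh, hql, hqw⟩ := hx₂B
    cases q with
    | nil => simp at hqh
    | cons v₀ q' =>
      have hv₀ : v₀ = v := by simpa using hqh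
      rw [hv₀] at hql hqw hqh
      cases q' with
      | nil => exact absurd (by simpa using hql) hv
      | cons c q'' =>
        have hmem : x₁ + x₂ ∈ {x | ∃ p : List V, p.head? = some s ∧ p.getLast? = some s ∧
            t ≤ (collected col p).card ∧ walkWeightE w p = x} := by
          refine ⟨p ++ (c :: q''), ?_, ?_, ?_, ?_⟩
          · cases p with
            | nil => simp at hph
            | cons p₀ p' => simpa using hph
          · rw [List.getLast?_append_cons]
            rw [List.getLast?_cons_cons] at hql
            exact hql
          · have h1 : S ⊆ collected col (p ++ c :: q'') := by
              rw [collected_append]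
              exact hpc.trans Finset.subset_union_left
            calc t = S.card := hS.symm
            _ ≤ _ := Finset.card_le_card h1
          · have h2 := walkWeightE_append w p (v :: c :: q'') v hpl (by simp)
            simp only [List.tail_cons] at h2
            rw [h2, hpw, hqw]
        calc sInf _ ≤ x₁ + x₂ := sInf_le hmem
        _ ≤ (sInf A + ε/2) + (sInf B + ε/2) := add_le_add hx₁.le hx₂.le
        _ = sInf A + sInf B + ε := by rw [add_add_add_comm, ENNReal.add_halves]
  · -- iInf ≤ sInf OPT
    refine le_sInf fun x hx => ?_
    obtain ⟨p, hph, hpl, hpc, hpw⟩ := hx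
    obtain ⟨S, hSsub, hScard⟩ := Finset.exists_subset_card_eq hpc
    have hSne : S.Nonempty := Finset.card_pos.mp (hScard ▸ ht)
    obtain ⟨a, v, b, hpeq, hcov, hint⟩ := split_collect col S hSne p hSsub
    obtain ⟨cc, hcc⟩ := hint
    rw [Finset.mem_inter] at hcc
    have hvs : v ≠ s := fun h => by
      rw [h, hcols] at hcc
      exact absurd hcc.1 (Finset.notMem_empty cc)
    cases a with
    | nil =>
      rw [hpeq] at hph
      have : v = s := by simpa using hph
      exact absurd this hvs
    | cons a₀ a' =>
      have ha₀ : a₀ = s := by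
        rw [hpeq] at hph
        simpa using hph
      rw [ha₀] at hpeq hcov
      have hlast : (v :: b).getLast? = some s := by
        rw [hpeq] at hpl
        rw [show (s :: a') ++ v :: b = ((s :: a') ++ [v]) ++ b from by simp] at hpl
        rw [show ((s :: a') ++ [v]) ++ b = (s :: a') ++ (v :: b) from by simp,
          List.getLast?_append_cons] at hpl
        exact hpl
      have hTle : T v S ≤ walkWeightE w ((s :: a') ++ [v]) := by
        rw [hT]
        exact sInf_le ⟨(s :: a') ++ [v], by simp, List.getLast?_concat, hcov, rfl⟩
      have hwle : w' v s ≤ walkWeightE w (v :: b) := by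
        rw [hw']
        exact sInf_le ⟨v :: b, by simp, hlast, rfl⟩
      have hsplit : walkWeightE w p
          = walkWeightE w ((s :: a') ++ [v]) + walkWeightE w (v :: b) := by
        have h3 := walkWeightE_append w ((s :: a') ++ [v]) (v :: b) v
          (List.getLast?_concat) (by simp)
        simp only [List.tail_cons] at h3
        rw [hpeq, ← h3]
        congr 1
        simp
      calc (⨅ (v : V) (_ : v ≠ s) (S : Finset C) (_ : S.card = t), T v S + w' v s)
          ≤ T v S + w' v s :=
            iInf_le_of_le v (iInf_le_of_le hvs (iInf_le_of_le S (iInf_le_of_le hScard le_rfl)))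
        _ ≤ walkWeightE w ((s :: a') ++ [v]) + walkWeightE w (v :: b) := add_le_add hTle hwle
        _ = x := by rw [← hsplit, hpw]
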